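/- arXiv:2305.14690 — 3 statements merged into one kernel-verified Lean document; each statement's English description precedes it below -/
import Mathlib

section
/- If the test support is not contained in the training support (i.e., the set where p_te > 0 but p_tr = 0 has positive p_te-measure), and the loss L is strictly positive everywhere, then the importance-weighted objective is strictly less than the test risk: E_{p_tr}[w*·L] < E_{p_te}[L]. -/
open MeasureTheory ENNReal
open scoped Classical

/-- If the part of the test support lying outside the training support has
positive test probability, and the loss `L` is strictly positive everywhere
(and integrable against `p_te`), then the importance-weighted objective is
strictly smaller than the test risk. -/
theorem iw_risk_inconsistent
    {Ω : Type*} [MeasurableSpace Ω] (ν : Measure Ω) [SigmaFinite ν]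
    (ptr pte : Ω → ℝ≥0∞) (hptr : Measurable ptr) (hpte : Measurable pte)
    (hptr1 : ∫⁻ ω, ptr ω ∂ν = 1) (hpte1 : ∫⁻ ω, pte ω ∂ν = 1)
    (L : Ω → ℝ≥0∞) (hL : Measurable L)
    (hLpos : ∀ ω, 0 < L ω) (hLfin : ∀ ω, L ω < ⊤)
    (hLint : ∫⁻ ω, L ω * pte ω ∂ν < ⊤)
    (hoot : 0 < ∫⁻ ω in {ω | 0 < pte ω ∧ ptr ω = 0}, pte ω ∂ν) :
    ∫⁻ ω, (if 0 < ptr ω then pte ω / ptr ω else 0) * L ω * ptr ω ∂ν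
      < ∫⁻ ω, L ω * pte ω ∂ν := by
  set S : Set Ω := {ω | 0 < pte ω ∧ ptr ω = 0} with hSdef
  have hSm : MeasurableSet S := by
    have : S = {ω | 0 < pte ω} ∩ {ω | ptr ω = 0} := rfl
    rw [this]
    exact (measurableSet_lt measurable_const hpte).inter (hptr (measurableSet_singleton 0))
  set f : Ω → ℝ≥0∞ := fun ω => (if 0 < ptr ω then pte ω / ptr ω else 0) * L ω * ptr ω with hfdef
  have hfm : Measurable f := by
    apply Measurable.mul _ hptr
    apply Measurable.mul _ hL
    exact Measurable.ite (measurableSet_lt measurable_const hptr) (hpte.div hptr) measurable_const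
  -- pointwise bound
  have hmono : ∀ ω, f ω ≤ L ω * pte ω := by
    intro ω
    simp only [hfdef]
    split_ifs with h
    · calc pte ω / ptr ω * L ω * ptr ω = pte ω / ptr ω * ptr ω * L ω := by ring
        _ ≤ pte ω * L ω := by
            gcongr
            rcases eq_or_ne (ptr ω) ⊤ with ht | ht
            · simp [ht]
            · rw [ENNReal.div_mul_cancel h.ne' ht]
        _ = L ω * pte ω := mul_comm _ _
    · simp
  -- f vanishes on S
  have hfS : ∫⁻ ω in S, f ω ∂ν = 0 := by
    rw [setLIntegral_congr_fun hSm (fun ω hω => ?_), lintegral_zero]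
    simp [hfdef, hω.2]
  -- positivity of the S-part of the RHS
  have hSpos : 0 < ∫⁻ ω in S, L ω * pte ω ∂ν := by
    by_contra h0
    push_neg at h0
    have h0 : ∫⁻ ω in S, L ω * pte ω ∂ν = 0 := le_antisymm h0 zero_le
    rw [lintegral_eq_zero_iff (f := fun ω => L ω * pte ω) (hL.mul hpte)] at h0
    have hpte0 : pte =ᵐ[ν.restrict S] 0 := by
      filter_upwards [h0] with ω hω
      rcases mul_eq_zero.mp hω with h | h
      · exact absurd h (hLpos ω).ne'
      · exact h
    rw [show (0:ℝ≥0∞) < ∫⁻ ω in S, pte ω ∂ν ↔ _ from pos_iff_ne_zero] at hoot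
    exact hoot ((lintegral_eq_zero_iff hpte).mpr hpte0)
  -- finiteness of the Sᶜ-part of the RHS
  have hfin : ∫⁻ ω in Sᶜ, L ω * pte ω ∂ν < ⊤ :=
    lt_of_le_of_lt (setLIntegral_le_lintegral _ _) hLint
  have hsplit : ∫⁻ ω, L ω * pte ω ∂ν
      = ∫⁻ ω in S, L ω * pte ω ∂ν + ∫⁻ ω in Sᶜ, L ω * pte ω ∂ν :=
    (lintegral_add_compl _ hSm).symm
  have hLHS : ∫⁻ ω, f ω ∂ν ≤ ∫⁻ ω in Sᶜ, L ω * pte ω ∂ν := by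
    rw [← lintegral_add_compl f hSm, hfS, zero_add]
    exact lintegral_mono hmono
  calc ∫⁻ ω, f ω ∂ν ≤ ∫⁻ ω in Sᶜ, L ω * pte ω ∂ν := hLHS
    _ < ∫⁻ ω in Sᶜ, L ω * pte ω ∂ν + ∫⁻ ω in S, L ω * pte ω ∂ν :=
        ENNReal.lt_add_right hfin.ne hSpos.ne'
    _ = ∫⁻ ω in S, L ω * pte ω ∂ν + ∫⁻ ω in Sᶜ, L ω * pte ω ∂ν := add_comm _ _
    _ = ∫⁻ ω, L ω * pte ω ∂ν := hsplit.symm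
end

section
/- In the second toy example, any classifier minimizing the IW objective (i.e., Bayes-optimal on the training support that extends its decision linearly/sign-constantly to each half-plane) achieves test accuracy exactly 1/2, equal to random guessing. -/
open MeasureTheory ENNReal
open scoped Classical

def squareTL : Set (ℝ × ℝ) := Set.Ioo (0 : ℝ) 1 ×ˢ Set.Ioo (1.1 : ℝ) 2.1
def squareBL : Set (ℝ × ℝ) := Set.Ioo (0 : ℝ) 1 ×ˢ Set.Ioo (0 : ℝ) 1
def squareTR : Set (ℝ × ℝ) := Set.Ioo (1.1 : ℝ) 2.1 ×ˢ Set.Ioo (1.1 : ℝ) 2.1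
def squareBR : Set (ℝ × ℝ) := Set.Ioo (1.1 : ℝ) 2.1 ×ˢ Set.Ioo (0 : ℝ) 1

noncomputable def pTeToy2 (p : ℝ × ℝ) (y : Bool) : ℝ≥0∞ :=
  if (y = true ∧ (p ∈ squareTL ∨ p ∈ squareBR)) ∨
     (y = false ∧ (p ∈ squareBL ∨ p ∈ squareTR)) then 1/4 else 0

noncomputable def toyAccuracy2 (f : ℝ × ℝ → ℝ) : ℝ≥0∞ :=
  ∑ y : Bool, ∫⁻ p in {p | (0 < f p ↔ y = true)}, pTeToy2 p y
    ∂(volume : Measure (ℝ × ℝ))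

lemma vol_square (a b : ℝ) (hab : b = a + 1) (c d : ℝ) (hcd : d = c + 1) :
    (volume : Measure (ℝ × ℝ)) (Set.Ioo a b ×ˢ Set.Ioo c d) = 1 := by
  rw [Measure.volume_eq_prod, Measure.prod_prod, Real.volume_Ioo, Real.volume_Ioo,
    hab, hcd]
  simp

/-- In the second toy example, any classifier that is Bayes-optimal on the
training support and extends its decision sign-constantly over each
horizontal band (positive on both top squares, negative on both bottom
squares) achieves test accuracy exactly 1/2 — random guessing. -/
theorem toy_example_two_iw_minimizer_accuracy_half
    (f : ℝ × ℝ → ℝ) (hf : Measurable f)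
    (htop : ∀ p ∈ squareTL ∪ squareTR, 0 < f p)
    (hbot : ∀ p ∈ squareBL ∪ squareBR, f p < 0) :
    toyAccuracy2 f = 1/2 := by
  have hS : MeasurableSet {p : ℝ × ℝ | 0 < f p} := measurableSet_lt measurable_const hf
  have hTLm : MeasurableSet squareTL := measurableSet_Ioo.prod measurableSet_Ioo
  have hBLm : MeasurableSet squareBL := measurableSet_Ioo.prod measurableSet_Ioo
  have h1 : (∫⁻ p in {p | (0 < f p ↔ true = true)}, pTeToy2 p true
      ∂(volume : Measure (ℝ × ℝ))) = 1/4 := by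
    have hset : {p : ℝ × ℝ | (0 < f p ↔ true = true)} = {p | 0 < f p} := by
      ext p; simp
    rw [hset, ← lintegral_indicator hS _]
    have heq : ∀ p, {p : ℝ × ℝ | 0 < f p}.indicator (fun p => pTeToy2 p true) p
        = squareTL.indicator (fun _ => (1/4 : ℝ≥0∞)) p := by
      intro p
      by_cases hTL : p ∈ squareTL
      · rw [Set.indicator_of_mem hTL,
          Set.indicator_of_mem (show p ∈ {p : ℝ × ℝ | 0 < f p} from htop p (Or.inl hTL))]
        simp [pTeToy2, hTL]
      · rw [Set.indicator_of_notMem hTL]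
        by_cases hp : p ∈ {p : ℝ × ℝ | 0 < f p}
        · rw [Set.indicator_of_mem hp]
          have hBR : p ∉ squareBR := fun h => absurd (hbot p (Or.inr h)) (not_lt.mpr (le_of_lt hp))
          simp [pTeToy2, hTL, hBR]
        · rw [Set.indicator_of_notMem hp]
    simp only [heq]
    rw [lintegral_indicator hTLm _, setLIntegral_const,
      show (volume squareTL) = 1 from vol_square 0 1 (by norm_num) 1.1 2.1 (by norm_num)]
    simp
  have h2 : (∫⁻ p in {p | (0 < f p ↔ false = true)}, pTeToy2 p false
      ∂(volume : Measure (ℝ × ℝ))) = 1/4 := by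
    have hset : {p : ℝ × ℝ | (0 < f p ↔ false = true)} = {p : ℝ × ℝ | 0 < f p}ᶜ := by
      ext p; simp
    rw [hset, ← lintegral_indicator hS.compl _]
    have heq : ∀ p, ({p : ℝ × ℝ | 0 < f p}ᶜ).indicator (fun p => pTeToy2 p false) p
        = squareBL.indicator (fun _ => (1/4 : ℝ≥0∞)) p := by
      intro p
      by_cases hBL : p ∈ squareBL
      · have hmem : p ∈ {p : ℝ × ℝ | 0 < f p}ᶜ := by
          simp only [Set.mem_compl_iff, Set.mem_setOf_eq, not_lt]
          exact le_of_lt (hbot p (Or.inl hBL))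
        rw [Set.indicator_of_mem hBL, Set.indicator_of_mem hmem]
        simp [pTeToy2, hBL]
      · rw [Set.indicator_of_notMem hBL]
        by_cases hp : p ∈ {p : ℝ × ℝ | 0 < f p}ᶜ
        · rw [Set.indicator_of_mem hp]
          have hTR : p ∉ squareTR := fun h => absurd (htop p (Or.inr h))
            (by simpa using hp)
          simp [pTeToy2, hBL, hTR]
        · rw [Set.indicator_of_notMem hp]
    simp only [heq]
    rw [lintegral_indicator hBLm _, setLIntegral_const,
      show (volume squareBL) = 1 from vol_square 0 1 (by norm_num) 0 1 (by norm_num)]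
    simp
  unfold toyAccuracy2
  rw [Fintype.sum_bool, h1, h2]
  rw [ENNReal.div_add_div_same,
    ENNReal.div_eq_div_iff (by norm_num) (by norm_num) (by norm_num) (by norm_num)]
  norm_num
end

section
/- In the second toy example, the Bayes-optimal test classifier is the 'checkerboard' classifier: any f with f > 0 on the top-left and bottom-right squares and f < 0 on the bottom-left and top-right squares achieves test accuracy 1, and no classifier can exceed this; hence IW (whose minimizer has accuracy 1/2) is classifier-inconsistent. -/
open MeasureTheory ENNReal
open scoped Classical

/-- The support set of `pTeToy2 · y`. -/
def toySupp2 (y : Bool) : Set (ℝ × ℝ) :=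
  if y = true then squareTL ∪ squareBR else squareBL ∪ squareTR

lemma pTeToy2_eq_indicator (p : ℝ × ℝ) (y : Bool) :
    pTeToy2 p y = (toySupp2 y).indicator (fun _ => (1/4 : ℝ≥0∞)) p := by
  cases y <;>
    simp [pTeToy2, toySupp2, Set.indicator_apply, Set.mem_union]

lemma measurableSet_toySupp2 (y : Bool) : MeasurableSet (toySupp2 y) := by
  cases y <;>
    exact ((measurableSet_Ioo.prod measurableSet_Ioo).union
      (measurableSet_Ioo.prod measurableSet_Ioo))

lemma volume_toySupp2 (y : Bool) : volume (toySupp2 y) = 2 := by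
  have key : ∀ a b c d : Set ℝ, Disjoint a c → MeasurableSet c → MeasurableSet d →
      volume ((a ×ˢ b : Set (ℝ × ℝ)) ∪ c ×ˢ d) = volume a * volume b + volume c * volume d := by
    intro a b c d hac hc hd2
    have hdis : Disjoint (a ×ˢ b : Set (ℝ × ℝ)) (c ×ˢ d) :=
      Set.disjoint_left.2 fun p hp hp' => Set.disjoint_left.1 hac hp.1 hp'.1
    rw [measure_union hdis (hc.prod hd2),
      Measure.volume_eq_prod, Measure.prod_prod, Measure.prod_prod]
  have hd : Disjoint (Set.Ioo (0:ℝ) 1) (Set.Ioo (1.1:ℝ) 2.1) := by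
    apply Set.disjoint_left.2
    intro x hx hx'
    simp only [Set.mem_Ioo] at hx hx'
    linarith [hx.2, hx'.1]
  cases y <;>
    · rw [toySupp2]
      simp only [if_true, if_false, Bool.false_eq_true, squareTL, squareBL, squareTR, squareBR]
      rw [key _ _ _ _ hd measurableSet_Ioo measurableSet_Ioo]
      simp [Real.volume_Ioo]
      norm_num

lemma setLIntegral_pTeToy2 (y : Bool) (S : Set (ℝ × ℝ)) :
    ∫⁻ p in S, pTeToy2 p y ∂(volume : Measure (ℝ × ℝ))
      = 1/4 * volume (toySupp2 y ∩ S) := by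
  simp only [pTeToy2_eq_indicator]
  rw [lintegral_indicator (measurableSet_toySupp2 y), Measure.restrict_restrict
      (measurableSet_toySupp2 y), setLIntegral_const]

/-- In the second toy example, the 'checkerboard' classifier (positive on the
top-left and bottom-right squares, negative on the bottom-left and top-right
squares) achieves test accuracy 1, and no classifier can exceed accuracy 1;
hence the IW minimizer (whose accuracy is 1/2) is classifier-inconsistent. -/
theorem toy_example_two_checkerboard_bayes_optimal
    (f : ℝ × ℝ → ℝ) (hf : Measurable f)
    (hpos : ∀ p ∈ squareTL ∪ squareBR, 0 < f p)
    (hneg : ∀ p ∈ squareBL ∪ squareTR, f p < 0) :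
    toyAccuracy2 f = 1 ∧ ∀ g : ℝ × ℝ → ℝ, toyAccuracy2 g ≤ 1 := by
  constructor
  · have h1 : ∀ y : Bool, toySupp2 y ∩ {p | (0 < f p ↔ y = true)} = toySupp2 y := by
      intro y
      apply Set.inter_eq_self_of_subset_left
      intro p hp
      cases y with
      | true => simpa using hpos p (by simpa [toySupp2] using hp)
      | false =>
        have := hneg p (by simpa [toySupp2] using hp)
        simp only [Set.mem_setOf_eq]
        constructor
        · intro h; linarith
        · simp
    rw [toyAccuracy2]
    simp only [setLIntegral_pTeToy2, h1, volume_toySupp2]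
    rw [Fintype.sum_bool, ← two_mul,
      show (2:ℝ≥0∞) * (1/4 * 2) = 4⁻¹ * 4 by rw [one_div]; ring,
      ENNReal.inv_mul_cancel (by norm_num) (by norm_num)]
  · intro g
    rw [toyAccuracy2]
    simp only [setLIntegral_pTeToy2]
    calc ∑ y : Bool, 1/4 * volume (toySupp2 y ∩ {p | (0 < g p ↔ y = true)})
        ≤ ∑ y : Bool, 1/4 * volume (toySupp2 y) := by
          apply Finset.sum_le_sum
          intro y _
          exact mul_le_mul_right (measure_mono Set.inter_subset_left) _
      _ = 1 := by
          simp only [volume_toySupp2]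
          rw [Fintype.sum_bool, ← two_mul,
            show (2:ℝ≥0∞) * (1/4 * 2) = 4⁻¹ * 4 by rw [one_div]; ring,
            ENNReal.inv_mul_cancel (by norm_num) (by norm_num)]
end
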